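/- Let f : ℝ^d → ℝ be a differentiable function with gradient g = ∇f(x) at a point x ∈ ℝ^d, let q ≥ 1, and let u_1, …, u_q be i.i.d. standard Gaussian vectors in ℝ^d (u_i ~ N(0, I_d)). Then for every coordinate k ∈ {1, …, d}, the expectation over u_1, …, u_q of the squared k-th coordinate of the averaged projected-gradient estimator (1/q) Σ_{i=1}^q ⟨g, u_i⟩ u_i equals (1/q)(‖g‖² + g_k²) + g_k². In vector form, E_u[((1/q) Σ_{i=1}^q ⟨∇f(x), u_i⟩ u_i)²] = (1/q)(‖∇f(x)‖² 1_d + ∇f(x)²) + ∇f(x)², where (·)² denotes the element-wise square. -/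

import Mathlib

open MeasureTheory ProbabilityTheory Metric
open scoped RealInnerProductSpace ENNReal

noncomputable section

/-- The standard Gaussian measure `N(0, I_d)` on `ℝ^d`, realized as the pushforward of the
product of `d` standard real Gaussians along the canonical measurable equivalence. -/
def stdGaussian (d : ℕ) : Measure (EuclideanSpace ℝ (Fin d)) :=
  (Measure.pi fun _ : Fin d => gaussianReal 0 1).map (MeasurableEquiv.toLp 2 (Fin d → ℝ))

instance (d : ℕ) : IsProbabilityMeasure (stdGaussian d) :=
  Measure.isProbabilityMeasure_map (MeasurableEquiv.measurable _).aemeasurable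

section Helpers

open Real


lemma gauss_integral_eq (h : ℝ → ℝ) :
    ∫ x, h x ∂(gaussianReal 0 1)
      = ∫ x, gaussianPDFReal 0 1 x * h x := by
  rw [gaussianReal_of_var_ne_zero 0 one_ne_zero]
  rw [show gaussianPDF 0 1 = fun x => ((gaussianPDFReal 0 1 x).toNNReal : ℝ≥0∞) from rfl]
  rw [integral_withDensity_eq_integral_smul ((measurable_gaussianPDFReal 0 1).real_toNNReal) h]
  congr 1
  ext x
  simp [NNReal.smul_def, Real.coe_toNNReal _ (gaussianPDFReal_nonneg 0 1 x)]

def J (n : ℕ) : ℝ := ∫ t in Set.Ioi (0:ℝ), t ^ (n:ℝ) * rexp (-(1/2) * t ^ 2)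

lemma J_eq (n : ℕ) :
    J n = (1/2:ℝ) ^ (-((n:ℝ)+1)/2) * (1/2) * Real.Gamma (((n:ℝ)+1)/2) := by
  have := integral_rpow_mul_exp_neg_mul_rpow (p := 2) (q := (n:ℝ)) (b := 1/2) (by norm_num)
    (neg_one_lt_zero.trans_le (Nat.cast_nonneg n)) (by norm_num)
  simp_rw [show ∀ t:ℝ, t ^ (2:ℝ) = t ^ 2 from fun t => by
    rw [show (2:ℝ) = ((2:ℕ):ℝ) by norm_num, Real.rpow_natCast]] at this
  exact this

lemma gauss_moment_eq (n : ℕ) (hn : Even n) :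
    ∫ x, x ^ n ∂(gaussianReal 0 1) = (√(2 * π))⁻¹ * (2 * J n) := by
  rw [gauss_integral_eq]
  have h : ∀ x : ℝ, gaussianPDFReal 0 1 x * x ^ n
      = (√(2 * π))⁻¹ * (|x| ^ (n:ℝ) * rexp (-(1/2) * |x| ^ 2)) := by
    intro x
    simp only [gaussianPDFReal, NNReal.coe_one, mul_one, sub_zero, Real.rpow_natCast,
      hn.pow_abs, sq_abs]
    ring_nf
  simp_rw [h]
  rw [integral_const_mul, integral_comp_abs (f := fun t => t ^ (n:ℝ) * rexp (-(1/2) * t ^ 2))]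
  rfl

lemma gauss_moment_odd (n : ℕ) (hn : Odd n) :
    ∫ x, x ^ n ∂(gaussianReal 0 1) = 0 := by
  rw [gauss_integral_eq]
  set F : ℝ → ℝ := fun x => gaussianPDFReal 0 1 x * x ^ n with hF
  have hodd : ∀ x, F (-x) = - F x := by
    intro x
    simp only [hF, gaussianPDFReal, NNReal.coe_one, mul_one, sub_zero, hn.neg_pow,
      neg_sq, mul_neg]
  have := integral_neg_eq_self F (volume : Measure ℝ)
  simp_rw [hodd, integral_neg] at this
  linarith

lemma J_two : J 2 = J 0 := by
  rw [J_eq, J_eq]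
  have h1 : ((2:ℕ):ℝ) = 2 := by norm_num
  have h0 : ((0:ℕ):ℝ) = 0 := by norm_num
  rw [h1, h0]
  have hG : Real.Gamma (((2:ℝ)+1)/2) = (1/2) * Real.Gamma (((0:ℝ)+1)/2) := by
    rw [show ((2:ℝ)+1)/2 = 1/2 + 1 by norm_num]
    rw [Real.Gamma_add_one (by norm_num)]
    norm_num
  rw [hG]
  have hr : (1/2:ℝ) ^ (-((2:ℝ)+1)/2) = 2 * (1/2:ℝ) ^ (-((0:ℝ)+1)/2) := by
    rw [show -((2:ℝ)+1)/2 = -(((0:ℝ)+1)/2) + (-1) by norm_num]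
    rw [Real.rpow_add (by norm_num), Real.rpow_neg_one]
    norm_num
    ring
  rw [hr]
  ring

lemma J_four : J 4 = 3 * J 2 := by
  rw [J_eq, J_eq]
  have h1 : ((4:ℕ):ℝ) = 4 := by norm_num
  have h2 : ((2:ℕ):ℝ) = 2 := by norm_num
  rw [h1, h2]
  have hG : Real.Gamma (((4:ℝ)+1)/2) = (3/2) * Real.Gamma (((2:ℝ)+1)/2) := by
    rw [show ((4:ℝ)+1)/2 = 3/2 + 1 by norm_num]
    rw [Real.Gamma_add_one (by norm_num)]
    norm_num
  rw [hG]
  have hr : (1/2:ℝ) ^ (-((4:ℝ)+1)/2) = 2 * (1/2:ℝ) ^ (-((2:ℝ)+1)/2) := by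
    rw [show -((4:ℝ)+1)/2 = -(((2:ℝ)+1)/2) + (-1) by norm_num]
    rw [Real.rpow_add (by norm_num), Real.rpow_neg_one]
    norm_num
    ring
  rw [hr]
  ring

lemma gmom_zero' : ∫ x, x ^ 0 ∂(gaussianReal 0 1) = 1 := by simp

lemma gmom_two' : ∫ x, x ^ 2 ∂(gaussianReal 0 1) = 1 := by
  rw [gauss_moment_eq 2 (by decide), J_two, ← gauss_moment_eq 0 (by decide), gmom_zero']

lemma gmom_four' : ∫ x, x ^ 4 ∂(gaussianReal 0 1) = 3 := by
  rw [gauss_moment_eq 4 (by decide), J_four]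
  calc (√(2*π))⁻¹ * (2 * (3 * J 2)) = 3 * ((√(2*π))⁻¹ * (2 * J 2)) := by ring
  _ = 3 := by rw [← gauss_moment_eq 2 (by decide), gmom_two', mul_one]

lemma gauss_integrable_pow (n : ℕ) :
    Integrable (fun x : ℝ => x ^ n) (gaussianReal 0 1) := by
  rw [gaussianReal_of_var_ne_zero 0 one_ne_zero]
  rw [show gaussianPDF 0 1 = fun x => ((gaussianPDFReal 0 1 x).toNNReal : ℝ≥0∞) from rfl]
  rw [integrable_withDensity_iff_integrable_smul ((measurable_gaussianPDFReal 0 1).real_toNNReal)]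
  have h := (integrable_rpow_mul_exp_neg_mul_sq (by norm_num : (0:ℝ) < 1/2) (s := (n:ℝ))
    (neg_one_lt_zero.trans_le (Nat.cast_nonneg n))).const_mul ((Real.sqrt (2 * π))⁻¹)
  refine h.congr (Filter.Eventually.of_forall fun x => ?_)
  show _ = (gaussianPDFReal 0 1 x).toNNReal • x ^ n
  rw [NNReal.smul_def, Real.coe_toNNReal _ (gaussianPDFReal_nonneg 0 1 x)]
  simp only [Real.rpow_natCast, gaussianPDFReal, NNReal.coe_one, mul_one, sub_zero, smul_eq_mul]
  ring_nf

def gmom (n : ℕ) : ℝ := ∫ x, x ^ n ∂(gaussianReal 0 1)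

lemma gmom_zero : gmom 0 = 1 := gmom_zero'
lemma gmom_one : gmom 1 = 0 := gauss_moment_odd 1 (by decide)
lemma gmom_two : gmom 2 = 1 := gmom_two'
lemma gmom_three : gmom 3 = 0 := gauss_moment_odd 3 (by decide)
lemma gmom_four : gmom 4 = 3 := gmom_four'

lemma pi_integral_prod {ι : Type*} [Fintype ι] {E : Type*} [MeasurableSpace E]
    (μ : Measure E) [SigmaFinite μ] (f : ι → E → ℝ) :
    ∫ x : ι → E, ∏ i, f i (x i) ∂(Measure.pi fun _ => μ) = ∏ i, ∫ x, f i x ∂μ := by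
  letI : MeasureSpace E := ⟨μ⟩
  exact MeasureTheory.integral_fintype_prod_eq_prod f (μ := fun _ => μ)

lemma pi_integrable_prod {ι : Type*} [Fintype ι] {E : Type*} [MeasurableSpace E]
    (μ : Measure E) [SigmaFinite μ] {f : ι → E → ℝ} (hf : ∀ i, Integrable (f i) μ) :
    Integrable (fun x : ι → E => ∏ i, f i (x i)) (Measure.pi fun _ => μ) := by
  letI : MeasureSpace E := ⟨μ⟩
  exact Integrable.fintype_prod hf

variable {d : ℕ}

lemma prod_pow_eval (v : Fin d → ℝ) (j k : Fin d) :
    v j * v k = ∏ m, (v m) ^ ((if m = j then 1 else 0) + (if m = k then 1 else 0)) := by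
  simp_rw [pow_add, Finset.prod_mul_distrib, pow_ite, pow_one, pow_zero, Finset.prod_ite_eq',
    Finset.mem_univ, if_true]

lemma prod_pow_eval3 (v : Fin d → ℝ) (j l k : Fin d) :
    v j * v l * (v k) ^ 2
      = ∏ m, (v m) ^ ((if m = j then 1 else 0) + (if m = l then 1 else 0)
          + (if m = k then 2 else 0)) := by
  simp_rw [pow_add, Finset.prod_mul_distrib, pow_ite, pow_one, pow_zero, Finset.prod_ite_eq',
    Finset.mem_univ, if_true]

lemma pow_prod_int (e : Fin d → ℕ) :
    ∫ v : Fin d → ℝ, ∏ m, (v m) ^ (e m) ∂(Measure.pi fun _ => gaussianReal 0 1)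
      = ∏ m, gmom (e m) :=
  pi_integral_prod _ (fun m x => x ^ e m)

lemma pow_prod_integrable (e : Fin d → ℕ) :
    Integrable (fun v : Fin d → ℝ => ∏ m, (v m) ^ (e m))
      (Measure.pi fun _ => gaussianReal 0 1) :=
  pi_integrable_prod _ (fun m => gauss_integrable_pow (e m))

lemma pair_integrable (j k : Fin d) :
    Integrable (fun v : Fin d → ℝ => v j * v k) (Measure.pi fun _ => gaussianReal 0 1) := by
  have := pow_prod_integrable (fun m => (if m = j then 1 else 0) + (if m = k then 1 else 0))
  exact this.congr (Filter.Eventually.of_forall fun v => (prod_pow_eval v j k).symm)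

lemma pair_int (j k : Fin d) :
    ∫ v : Fin d → ℝ, v j * v k ∂(Measure.pi fun _ => gaussianReal 0 1)
      = if j = k then 1 else 0 := by
  simp_rw [prod_pow_eval _ j k, pow_prod_int]
  by_cases hjk : j = k
  · subst hjk
    rw [if_pos rfl]
    have : ∀ m : Fin d, gmom ((if m = j then 1 else 0) + (if m = j then 1 else 0))
        = if m = j then gmom 2 else gmom 0 := by
      intro m; split_ifs <;> rfl
    rw [Finset.prod_congr rfl (fun m _ => this m)]
    simp [gmom_two, gmom_zero]
  · rw [if_neg hjk]
    refine Finset.prod_eq_zero (Finset.mem_univ j) ?_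
    simp [hjk, gmom_one]

lemma triple_integrable (j l k : Fin d) :
    Integrable (fun v : Fin d → ℝ => v j * v l * (v k) ^ 2)
      (Measure.pi fun _ => gaussianReal 0 1) := by
  have := pow_prod_integrable (fun m => (if m = j then 1 else 0) + (if m = l then 1 else 0)
    + (if m = k then 2 else 0))
  exact this.congr (Filter.Eventually.of_forall fun v => (prod_pow_eval3 v j l k).symm)

lemma triple_int (j l k : Fin d) :
    ∫ v : Fin d → ℝ, v j * v l * (v k) ^ 2 ∂(Measure.pi fun _ => gaussianReal 0 1)
      = if j = l then (if j = k then 3 else 1) else 0 := by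
  simp_rw [prod_pow_eval3 _ j l k, pow_prod_int]
  by_cases hjl : j = l
  · subst hjl
    rw [if_pos rfl]
    by_cases hjk : j = k
    · subst hjk
      rw [if_pos rfl]
      have : ∀ m : Fin d, gmom ((if m = j then 1 else 0) + (if m = j then 1 else 0)
          + (if m = j then 2 else 0)) = if m = j then gmom 4 else gmom 0 := by
        intro m; split_ifs <;> rfl
      rw [Finset.prod_congr rfl (fun m _ => this m)]
      simp [gmom_four, gmom_zero]
    · rw [if_neg hjk]
      have : ∀ m : Fin d, gmom ((if m = j then 1 else 0) + (if m = j then 1 else 0)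
          + (if m = k then 2 else 0))
          = if m = j then gmom 2 else (if m = k then gmom 2 else gmom 0) := by
        intro m
        by_cases h1 : m = j
        · subst h1; rw [if_neg hjk]; simp
        · by_cases h2 : m = k <;> simp [h1, h2, Ne.symm hjk]
      rw [Finset.prod_congr rfl (fun m _ => this m)]
      simp [gmom_two, gmom_zero]
  · rw [if_neg hjl]
    refine Finset.prod_eq_zero (Finset.mem_univ j) ?_
    by_cases hjk : j = k
    · subst hjk
      simp [Ne.symm, hjl, gmom_three]
    · simp [hjl, hjk, gmom_one]


end Helpers

/-- For a differentiable `f : ℝ^d → ℝ` with gradient `g = ∇f(x)` at `x`,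
`q ≥ 1`, and `u_1, …, u_q` i.i.d. standard Gaussian vectors, the expectation of the squared
`k`-th coordinate of `(1/q) ∑_i ⟨g, u_i⟩ u_i` equals `(1/q)(‖g‖² + g_k²) + g_k²`. -/
theorem gaussian_zo_estimator_sq_expectation
    {d q : ℕ} (hq : 1 ≤ q)
    (f : EuclideanSpace ℝ (Fin d) → ℝ) (x g : EuclideanSpace ℝ (Fin d))
    (hf : Differentiable ℝ f) (hg : gradient f x = g) (k : Fin d) :
    ∫ U : Fin q → EuclideanSpace ℝ (Fin d),
        ((((q : ℝ))⁻¹ • ∑ i : Fin q, ⟪g, U i⟫ • U i) k) ^ 2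
        ∂(Measure.pi fun _ : Fin q => stdGaussian d)
      = (1 / (q : ℝ)) * (‖g‖ ^ 2 + g k ^ 2) + g k ^ 2 := by
  classical
  clear hf hg
  have hq0 : (q : ℝ) ≠ 0 := Nat.cast_ne_zero.mpr (by omega)
  set Y : EuclideanSpace ℝ (Fin d) → ℝ := fun u => ⟪g, u⟫ * u k with hY
  -- composition with the measurable equiv
  have hYcomp : ∀ v : Fin d → ℝ,
      Y ((MeasurableEquiv.toLp 2 (Fin d → ℝ)) v) = ∑ j, g j * (v j * v k) := by
    intro v
    have hc : ∀ j, ((MeasurableEquiv.toLp 2 (Fin d → ℝ)) v) j = v j := fun _ => rfl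
    simp only [hY, PiLp.inner_apply, RCLike.inner_apply, conj_trivial, hc]
    rw [Finset.sum_mul]
    exact Finset.sum_congr rfl fun j _ => by ring
  have hmap : ∀ h : EuclideanSpace ℝ (Fin d) → ℝ,
      ∫ u, h u ∂(stdGaussian d)
        = ∫ v, h ((MeasurableEquiv.toLp 2 (Fin d → ℝ)) v)
            ∂(Measure.pi fun _ : Fin d => gaussianReal 0 1) := fun h =>
    MeasureTheory.integral_map_equiv (MeasurableEquiv.toLp 2 (Fin d → ℝ)) h
  have hYint : Integrable Y (stdGaussian d) := by
    refine (MeasureTheory.integrable_map_equiv (MeasurableEquiv.toLp 2 (Fin d → ℝ))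
      Y).mpr ?_
    refine (integrable_finset_sum (f := fun (j : Fin d) (v : Fin d → ℝ) => g j * (v j * v k))
      Finset.univ (fun j _ => ((pair_integrable j k).const_mul (g j)))).congr ?_
    exact Filter.Eventually.of_forall fun v => (hYcomp v).symm
  have hM1 : ∫ u, Y u ∂(stdGaussian d) = g k := by
    rw [hmap Y]
    simp_rw [hYcomp]
    rw [integral_finset_sum _ (fun j _ => (pair_integrable j k).const_mul (g j))]
    simp_rw [integral_const_mul, pair_int]
    simp
  have hYYcomp : ∀ v : Fin d → ℝ,
      Y ((MeasurableEquiv.toLp 2 (Fin d → ℝ)) v)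
        * Y ((MeasurableEquiv.toLp 2 (Fin d → ℝ)) v)
        = ∑ j, ∑ l, (g j * g l) * (v j * v l * (v k) ^ 2) := by
    intro v
    rw [hYcomp, Finset.sum_mul_sum]
    exact Finset.sum_congr rfl fun j _ => Finset.sum_congr rfl fun l _ => by ring
  have hYYint : Integrable (fun u => Y u * Y u) (stdGaussian d) := by
    refine (MeasureTheory.integrable_map_equiv (MeasurableEquiv.toLp 2 (Fin d → ℝ))
      (fun u => Y u * Y u)).mpr ?_
    refine (integrable_finset_sum
      (f := fun (j : Fin d) (v : Fin d → ℝ) => ∑ l, (g j * g l) * (v j * v l * (v k) ^ 2))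
      Finset.univ (fun j _ => integrable_finset_sum _
      (fun l _ => (triple_integrable j l k).const_mul (g j * g l)))).congr ?_
    exact Filter.Eventually.of_forall fun v => (hYYcomp v).symm
  set M2 : ℝ := (∑ j, g j ^ 2) + 2 * g k ^ 2 with hM2def
  have hM2 : ∫ u, Y u * Y u ∂(stdGaussian d) = M2 := by
    rw [hmap (fun u => Y u * Y u)]
    simp_rw [hYYcomp]
    rw [integral_finset_sum _ (fun j _ => integrable_finset_sum _
      (fun l _ => (triple_integrable j l k).const_mul (g j * g l)))]
    have hinner : ∀ j : Fin d,
        ∫ v : Fin d → ℝ, ∑ l, (g j * g l) * (v j * v l * (v k) ^ 2)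
            ∂(Measure.pi fun _ => gaussianReal 0 1)
          = g j * g j * (if j = k then 3 else 1) := by
      intro j
      rw [integral_finset_sum _ (fun l _ => (triple_integrable j l k).const_mul (g j * g l))]
      simp_rw [integral_const_mul, triple_int]
      simp [Finset.sum_ite_eq, mul_ite]
    rw [Finset.sum_congr rfl (fun j _ => hinner j)]
    have hpt : ∀ j : Fin d, g j * g j * (if j = k then 3 else 1)
        = g j ^ 2 + (if j = k then 2 * g k ^ 2 else 0) := by
      intro j
      by_cases h : j = k
      · subst h; simp; ring
      · simp [h]; ring
    rw [Finset.sum_congr rfl (fun j _ => hpt j), Finset.sum_add_distrib]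
    simp [hM2def]
  -- rewrite the integrand
  have hcoord : ∀ U : Fin q → EuclideanSpace ℝ (Fin d),
      ((((q : ℝ))⁻¹ • ∑ i : Fin q, ⟪g, U i⟫ • U i) k) ^ 2
        = (q : ℝ)⁻¹ ^ 2 * ∑ i, ∑ j, Y (U i) * Y (U j) := by
    intro U
    have h1 : ((((q : ℝ))⁻¹ • ∑ i : Fin q, ⟪g, U i⟫ • U i) k)
        = (q : ℝ)⁻¹ * ∑ i, Y (U i) := by
      have h2 : (∑ i : Fin q, ⟪g, U i⟫ • U i) k = ∑ i : Fin q, ⟪g, U i⟫ * (U i) k := by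
        rw [WithLp.ofLp_sum, Finset.sum_apply]
        rfl
      simp only [PiLp.smul_apply, smul_eq_mul, h2, hY]
    rw [h1, mul_pow, sq (∑ i, Y (U i)), Finset.sum_mul_sum]
  simp_rw [hcoord]
  rw [integral_const_mul]
  -- product form for the cross terms
  have hprodform : ∀ (i j : Fin q) (U : Fin q → EuclideanSpace ℝ (Fin d)),
      Y (U i) * Y (U j)
        = ∏ m, ((if m = i then Y (U m) else 1) * (if m = j then Y (U m) else 1)) := by
    intro i j U
    rw [Finset.prod_mul_distrib]
    simp [Finset.prod_ite_eq']
  have hfm_int : ∀ i j m : Fin q,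
      Integrable (fun u => (if m = i then Y u else 1) * (if m = j then Y u else 1))
        (stdGaussian d) := by
    intro i j m
    by_cases h1 : m = i
    · by_cases h2 : m = j
      · simp only [if_pos h1, if_pos h2]
        exact hYYint
      · simp only [if_pos h1, if_neg h2, mul_one]
        exact hYint
    · by_cases h2 : m = j
      · simp only [if_neg h1, if_pos h2, one_mul]
        exact hYint
      · simp only [if_neg h1, if_neg h2, mul_one]
        exact integrable_const 1
  have hpair_int : ∀ i j : Fin q,
      Integrable (fun U : Fin q → EuclideanSpace ℝ (Fin d) => Y (U i) * Y (U j))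
        (Measure.pi fun _ : Fin q => stdGaussian d) := by
    intro i j
    have := pi_integrable_prod (stdGaussian d)
      (f := fun m u => (if m = i then Y u else 1) * (if m = j then Y u else 1))
      (fun m => hfm_int i j m)
    exact this.congr (Filter.Eventually.of_forall fun U => (hprodform i j U).symm)
  have key : ∀ i j : Fin q,
      ∫ U : Fin q → EuclideanSpace ℝ (Fin d), Y (U i) * Y (U j)
          ∂(Measure.pi fun _ : Fin q => stdGaussian d)
        = if i = j then M2 else g k * g k := by
    intro i j
    simp_rw [hprodform i j]
    rw [pi_integral_prod (stdGaussian d)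
      (fun m u => (if m = i then Y u else 1) * (if m = j then Y u else 1))]
    by_cases hij : i = j
    · subst hij
      rw [if_pos rfl]
      have hval : ∀ m : Fin q,
          ∫ u, (if m = i then Y u else 1) * (if m = i then Y u else 1) ∂(stdGaussian d)
            = if m = i then M2 else 1 := by
        intro m
        by_cases h : m = i
        · simp only [if_pos h]
          exact hM2
        · simp [h]
      rw [Finset.prod_congr rfl (fun m _ => hval m)]
      simp
    · rw [if_neg hij]
      have hval : ∀ m : Fin q,
          ∫ u, (if m = i then Y u else 1) * (if m = j then Y u else 1) ∂(stdGaussian d)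
            = (if m = i then g k else 1) * (if m = j then g k else 1) := by
        intro m
        by_cases h1 : m = i
        · have h2 : ¬ m = j := fun hmj => hij (h1.symm.trans hmj)
          simp only [if_pos h1, if_neg h2, mul_one]
          exact hM1
        · by_cases h2 : m = j
          · simp only [if_neg h1, if_pos h2, one_mul]
            exact hM1
          · simp [h1, h2]
      rw [Finset.prod_congr rfl (fun m _ => hval m)]
      rw [Finset.prod_mul_distrib]
      simp [Finset.prod_ite_eq']
  rw [integral_finset_sum _ (fun i _ => integrable_finset_sum _ (fun j _ => hpair_int i j))]
  have hstep : ∀ i : Fin q,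
      ∫ U : Fin q → EuclideanSpace ℝ (Fin d), ∑ j, Y (U i) * Y (U j)
          ∂(Measure.pi fun _ : Fin q => stdGaussian d)
        = (q : ℝ) * (g k * g k) + (M2 - g k * g k) := by
    intro i
    rw [integral_finset_sum _ (fun j _ => hpair_int i j)]
    rw [Finset.sum_congr rfl (fun j _ => key i j)]
    have : ∀ j : Fin q, (if i = j then M2 else g k * g k)
        = g k * g k + (if i = j then M2 - g k * g k else 0) := by
      intro j; split_ifs <;> ring
    rw [Finset.sum_congr rfl (fun j _ => this j), Finset.sum_add_distrib, Finset.sum_const,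
      Finset.sum_ite_eq, Finset.card_univ, Fintype.card_fin]
    simp [nsmul_eq_mul]
  rw [Finset.sum_congr rfl (fun i _ => hstep i), Finset.sum_const, Finset.card_univ,
    Fintype.card_fin, nsmul_eq_mul]
  have hnorm : ‖g‖ ^ 2 = ∑ j, g j ^ 2 := by
    rw [EuclideanSpace.norm_eq, Real.sq_sqrt (by positivity)]
    simp [sq_abs]
  rw [hnorm, hM2def]
  field_simp
  ring
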